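/- Let X = (X_j, X_{∼j}) be a random vector with values in ℝ × ℝ^{d−1}, let Z be a random vector in ℝ^{d−1} independent of X_j, and let r_j : ℝ × ℝ^{d−1} → ℝ^{d−1} be measurable with (X_j, r_j(X_j, Z)) identically distributed as (X_j, X_{∼j}). Let T_j : ℝ → ℝ be a measurable bijection with measurable inverse, T_{∼j} : ℝ^{d−1} → ℝ^{d−1} measurable, and let (Y_j, Y_{w_1}, …, Y_{w_{d−1}}) be a random vector such that (|Y_j|, |Y_{w_1}|, …, |Y_{w_{d−1}}|) is identically distributed as (T_j(X_j), T_{∼j}(X_{∼j})) (absolute values taken componentwise) and each Y_{w_i} has a distribution symmetric about 0. If R is a Rademacher random variable (P(R = 1) = P(R = −1) = 1/2) independent of (X_j, Z), then for every i ∈ {1,…,d−1} the real random variable R·[T_{∼j}(r_j(X_j, Z))]_i has the same distribution as Y_{w_i}. -/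
import Mathlib


open MeasureTheory ProbabilityTheory

lemma my_smul_prod {α β : Type*} [MeasurableSpace α] [MeasurableSpace β]
    (c : ENNReal) (μ : Measure α) (ν : Measure β) [SFinite μ] [SFinite ν] :
    (c • μ).prod ν = c • μ.prod ν := by
  ext s hs
  rw [Measure.prod_apply hs, Measure.smul_apply, Measure.prod_apply hs,
    lintegral_smul_measure, smul_eq_mul]

lemma my_symm_decomp {Ω' : Type*} [MeasurableSpace Ω'] (P' : Measure Ω')
    (Y : Ω' → ℝ) (hY : Measurable Y)
    (hsym : P'.map Y = P'.map (fun ω => -Y ω)) :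
    P'.map Y = (1/2 : ENNReal) • P'.map (fun ω => |Y ω|)
      + (1/2 : ENNReal) • (P'.map (fun ω => |Y ω|)).map Neg.neg := by
  have hYa : Measurable fun ω => |Y ω| := hY.abs
  have hYn : Measurable fun ω => -Y ω := hY.neg
  ext s hs
  have hnegs : MeasurableSet (Neg.neg ⁻¹' s : Set ℝ) := measurable_neg hs
  rw [Measure.map_apply hY hs, Measure.add_apply, Measure.smul_apply, Measure.smul_apply,
    Measure.map_apply measurable_neg hs, Measure.map_apply hYa hs,
    Measure.map_apply hYa hnegs, smul_eq_mul, smul_eq_mul]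
  set A : Set Ω' := {ω | 0 ≤ Y ω} with hA
  have hAm : MeasurableSet A := measurableSet_le measurable_const hY
  have e1 : (fun ω => |Y ω|) ⁻¹' s
      = (Y ⁻¹' s ∩ A) ∪ ((fun ω => -Y ω) ⁻¹' s ∩ Aᶜ) := by
    ext ω
    by_cases h : 0 ≤ Y ω
    · simp [Set.mem_preimage, hA, abs_of_nonneg h, h]
    · simp [Set.mem_preimage, hA, abs_of_neg (lt_of_not_ge h), h]
  have e2 : (fun ω => |Y ω|) ⁻¹' (Neg.neg ⁻¹' s)
      = ((fun ω => -Y ω) ⁻¹' s ∩ A) ∪ (Y ⁻¹' s ∩ Aᶜ) := by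
    ext ω
    by_cases h : 0 ≤ Y ω
    · simp [Set.mem_preimage, hA, abs_of_nonneg h, h]
    · simp [Set.mem_preimage, hA, abs_of_neg (lt_of_not_ge h), h]
  have d1 : Disjoint (Y ⁻¹' s ∩ A) ((fun ω => -Y ω) ⁻¹' s ∩ Aᶜ) :=
    disjoint_compl_right.mono Set.inter_subset_right Set.inter_subset_right
  have d2 : Disjoint ((fun ω => -Y ω) ⁻¹' s ∩ A) (Y ⁻¹' s ∩ Aᶜ) :=
    disjoint_compl_right.mono Set.inter_subset_right Set.inter_subset_right
  rw [e1, e2, measure_union d1 ((hYn hs).inter hAm.compl),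
    measure_union d2 ((hY hs).inter hAm.compl)]
  have hsum1 : P' (Y ⁻¹' s ∩ A) + P' (Y ⁻¹' s ∩ Aᶜ) = P' (Y ⁻¹' s) := by
    rw [← Set.diff_eq]; exact measure_inter_add_diff _ hAm
  have hsum2 : P' ((fun ω => -Y ω) ⁻¹' s ∩ A) + P' ((fun ω => -Y ω) ⁻¹' s ∩ Aᶜ)
      = P' ((fun ω => -Y ω) ⁻¹' s) := by
    rw [← Set.diff_eq]; exact measure_inter_add_diff _ hAm
  have hneg : P' ((fun ω => -Y ω) ⁻¹' s) = P' (Y ⁻¹' s) := by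
    have := congrArg (fun μ : Measure ℝ => μ s) hsym
    simpa [Measure.map_apply hY hs, Measure.map_apply hYn hs] using this.symm
  have key : P' (Y ⁻¹' s ∩ A) + P' ((fun ω => -Y ω) ⁻¹' s ∩ Aᶜ)
      + (P' ((fun ω => -Y ω) ⁻¹' s ∩ A) + P' (Y ⁻¹' s ∩ Aᶜ))
      = P' (Y ⁻¹' s) + P' (Y ⁻¹' s) := by
    calc P' (Y ⁻¹' s ∩ A) + P' ((fun ω => -Y ω) ⁻¹' s ∩ Aᶜ)
        + (P' ((fun ω => -Y ω) ⁻¹' s ∩ A) + P' (Y ⁻¹' s ∩ Aᶜ))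
        = (P' (Y ⁻¹' s ∩ A) + P' (Y ⁻¹' s ∩ Aᶜ))
          + (P' ((fun ω => -Y ω) ⁻¹' s ∩ A) + P' ((fun ω => -Y ω) ⁻¹' s ∩ Aᶜ)) := by ring
      _ = P' (Y ⁻¹' s) + P' (Y ⁻¹' s) := by rw [hsum1, hsum2, hneg]
  calc P' (Y ⁻¹' s)
      = (1/2 : ENNReal) * (P' (Y ⁻¹' s) + P' (Y ⁻¹' s)) := by
        rw [← two_mul, ← mul_assoc, one_div,
          ENNReal.inv_mul_cancel (by norm_num) (by norm_num), one_mul]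
    _ = (1/2 : ENNReal) * (P' (Y ⁻¹' s ∩ A) + P' ((fun ω => -Y ω) ⁻¹' s ∩ Aᶜ)
          + (P' ((fun ω => -Y ω) ⁻¹' s ∩ A) + P' (Y ⁻¹' s ∩ Aᶜ))) := by rw [key]
    _ = (1/2 : ENNReal) * (P' (Y ⁻¹' s ∩ A) + P' ((fun ω => -Y ω) ⁻¹' s ∩ Aᶜ))
          + (1/2 : ENNReal) * (P' ((fun ω => -Y ω) ⁻¹' s ∩ A) + P' (Y ⁻¹' s ∩ Aᶜ)) := by
        rw [mul_add]

/-- Proposition 2(ii), componentwise: transformation of dependency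
functions with absolute values. If `r_j` is a dependency model of `(X_j, X_{∼j})`,
`T_j` is a measurable bijection with measurable inverse, `T_{∼j}` is measurable,
`(|Y_j|, |Y_{w_1}|, …, |Y_{w_{d−1}}|)` is identically distributed as
`(T_j(X_j), T_{∼j}(X_{∼j}))` (componentwise absolute values), each `Y_{w_i}` is symmetric
about `0`, and `R` is a Rademacher variable independent of `(X_j, Z)`, then for every `i`
the variable `R ⬝ [T_{∼j}(r_j(X_j, Z))]_i` has the same distribution as `Y_{w_i}`.
Here `m = d - 1`. -/
theorem dependency_model_abs_transform {Ω Ω' : Type*} [MeasurableSpace Ω] [MeasurableSpace Ω']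
    (P : Measure Ω) (P' : Measure Ω') [IsProbabilityMeasure P] [IsProbabilityMeasure P']
    (m : ℕ)
    (Xj : Ω → ℝ) (Xnj : Ω → (Fin m → ℝ)) (Z : Ω → (Fin m → ℝ))
    (hXj : Measurable Xj) (hXnj : Measurable Xnj) (hZ : Measurable Z)
    (hindep : IndepFun Xj Z P)
    (rj : ℝ × (Fin m → ℝ) → (Fin m → ℝ)) (hrj : Measurable rj)
    (hdm : IdentDistrib (fun ω => (Xj ω, rj (Xj ω, Z ω))) (fun ω => (Xj ω, Xnj ω)) P P)
    (Tj Tinv : ℝ → ℝ) (hTj : Measurable Tj) (hTinv : Measurable Tinv)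
    (hleft : Function.LeftInverse Tinv Tj) (hright : Function.RightInverse Tinv Tj)
    (Tnj : (Fin m → ℝ) → (Fin m → ℝ)) (hTnj : Measurable Tnj)
    (Yj : Ω' → ℝ) (Yw : Ω' → (Fin m → ℝ))
    (hYabs : IdentDistrib (fun ω' => (|Yj ω'|, fun i => |Yw ω' i|))
      (fun ω => (Tj (Xj ω), Tnj (Xnj ω))) P' P)
    (hYsymm : ∀ i : Fin m, IdentDistrib (fun ω' => Yw ω' i) (fun ω' => -(Yw ω' i)) P' P')
    (R : Ω → ℝ) (hR : Measurable R)
    (hRlaw : P.map R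
      = (1/2 : ENNReal) • Measure.dirac (1 : ℝ) + (1/2 : ENNReal) • Measure.dirac (-1 : ℝ))
    (hRindep : IndepFun R (fun ω => (Xj ω, Z ω)) P) :
    ∀ i : Fin m,
      IdentDistrib (fun ω => R ω * Tnj (rj (Xj ω, Z ω)) i) (fun ω' => Yw ω' i) P P' := by
  intro i
  set W : Ω → ℝ := fun ω => Tnj (rj (Xj ω, Z ω)) i with hWdef
  have hWmeas : Measurable W :=
    (measurable_pi_apply i).comp (hTnj.comp (hrj.comp (hXj.prodMk hZ)))
  have hRW : IndepFun R W P :=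
    hRindep.comp measurable_id
      ((measurable_pi_apply i).comp (hTnj.comp hrj))
  set ν : Measure ℝ := P.map W with hν
  haveI : IsProbabilityMeasure ν := Measure.isProbabilityMeasure_map hWmeas.aemeasurable
  -- joint law is a product
  have hjoint : P.map (fun ω => (R ω, W ω)) = (P.map R).prod ν :=
    (indepFun_iff_map_prod_eq_prod_map_map hR.aemeasurable hWmeas.aemeasurable).mp hRW
  have hmul : Measurable fun p : ℝ × ℝ => p.1 * p.2 := measurable_fst.mul measurable_snd
  haveI h1fin : IsFiniteMeasure ((1/2 : ENNReal) • Measure.dirac (1 : ℝ)) :=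
    ⟨by simp⟩
  haveI h2fin : IsFiniteMeasure ((1/2 : ENNReal) • Measure.dirac (-1 : ℝ)) :=
    ⟨by simp⟩
  -- law of R * W
  have hL : P.map (fun ω => R ω * W ω)
      = (1/2 : ENNReal) • ν + (1/2 : ENNReal) • ν.map Neg.neg := by
    have hc : (fun ω => R ω * W ω)
        = (fun p : ℝ × ℝ => p.1 * p.2) ∘ (fun ω => (R ω, W ω)) := rfl
    rw [hc, ← Measure.map_map hmul (hR.prodMk hWmeas), hjoint, hRlaw,
      Measure.add_prod, my_smul_prod, my_smul_prod,
      Measure.map_add _ _ hmul, Measure.map_smul, Measure.map_smul,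
      Measure.dirac_prod, Measure.dirac_prod,
      Measure.map_map hmul measurable_prodMk_left,
      Measure.map_map hmul measurable_prodMk_left]
    have e1 : ((fun p : ℝ × ℝ => p.1 * p.2) ∘ Prod.mk (1 : ℝ)) = id := by
      funext x; simp
    have e2 : ((fun p : ℝ × ℝ => p.1 * p.2) ∘ Prod.mk (-1 : ℝ)) = Neg.neg := by
      funext x; simp
    rw [e1, e2, Measure.map_id]
  -- identify ν with the law of |Yw · i|
  have hg : Measurable (fun p : ℝ × (Fin m → ℝ) => Tnj p.2 i) :=
    (measurable_pi_apply i).comp (hTnj.comp measurable_snd)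
  have hg' : Measurable (fun p : ℝ × (Fin m → ℝ) => p.2 i) :=
    (measurable_pi_apply i).comp measurable_snd
  have hWlaw : IdentDistrib W (fun ω => Tnj (Xnj ω) i) P P := hdm.comp hg
  have habsId : IdentDistrib (fun ω' => |Yw ω' i|) (fun ω => Tnj (Xnj ω) i) P' P :=
    hYabs.comp hg'
  have hWabs : IdentDistrib W (fun ω' => |Yw ω' i|) P P' :=
    hWlaw.trans habsId.symm
  have hνa : ν = P'.map (fun ω' => |Yw ω' i|) := hWabs.map_eq
  -- symmetric decomposition for Yw · i
  have hYae : AEMeasurable (fun ω' => Yw ω' i) P' := (hYsymm i).aemeasurable_fst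
  set Y' : Ω' → ℝ := hYae.mk _ with hY'def
  have hY'meas : Measurable Y' := hYae.measurable_mk
  have heq : (fun ω' => Yw ω' i) =ᵐ[P'] Y' := hYae.ae_eq_mk
  have hmap_eq : P'.map (fun ω' => Yw ω' i) = P'.map Y' := Measure.map_congr heq
  have habs_eq : P'.map (fun ω' => |Yw ω' i|) = P'.map (fun ω' => |Y' ω'|) :=
    Measure.map_congr (heq.mono fun ω h => by simp [h])
  have hsymY' : P'.map Y' = P'.map (fun ω' => -Y' ω') := by
    have h1 : P'.map (fun ω' => -(Yw ω' i)) = P'.map (fun ω' => -Y' ω') :=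
      Measure.map_congr (heq.mono fun ω h => by simp [h])
    rw [← hmap_eq, ← h1]
    exact (hYsymm i).map_eq
  have hdecomp := my_symm_decomp P' Y' hY'meas hsymY'
  refine ⟨(hR.mul hWmeas).aemeasurable, hYae, ?_⟩
  rw [hL, hmap_eq, hdecomp, hνa, habs_eq]
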